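/- Let n ≥ 3 and let Ω ⊂ R^n be a bounded domain containing the origin. Suppose h ∈ C^2(R^n \ Ω) satisfies a^{ij} D_{ij} h = g in R^n \ Ω̄, where (a^{ij}) is a constant symmetric positive definite matrix and |g(x)| ≤ c2 |x|^{−δ} with δ > 2. If h(x) → h_∞ as |x| → ∞, then h(x) − h_∞ = O(|x|^{2−min{δ,n}}) if δ ≠ n, and h(x) − h_∞ = O(|x|^{2−n} ln|x|) if δ = n, as |x| → ∞. -/

import Mathlib

open Real Filter Matrix

section helpers


lemma exists_open_contDiffOn (φ : ℝ → ℝ) (hφ : ContDiffAt ℝ 2 φ 0) :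
    ∃ V : Set ℝ, IsOpen V ∧ (0:ℝ) ∈ V ∧ ContDiffOn ℝ 2 φ V := by
  obtain ⟨u, hu, hcd⟩ := hφ.contDiffOn le_rfl (by simp)
  obtain ⟨V, hVu, hVo, h0V⟩ := mem_nhds_iff.1 hu
  exact ⟨V, hVo, h0V, hcd.mono hVu⟩

lemma deriv2_add (φ ψ : ℝ → ℝ) (hφ : ContDiffAt ℝ 2 φ 0) (hψ : ContDiffAt ℝ 2 ψ 0) :
    deriv (deriv (fun t => φ t + ψ t)) 0 = deriv (deriv φ) 0 + deriv (deriv ψ) 0 := by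
  obtain ⟨V, hVo, h0V, hφV⟩ := exists_open_contDiffOn φ hφ
  obtain ⟨U, hUo, h0U, hψU⟩ := exists_open_contDiffOn ψ hψ
  have hWo : IsOpen (V ∩ U) := hVo.inter hUo
  have h0W : (0:ℝ) ∈ V ∩ U := ⟨h0V, h0U⟩
  have hdφ : ∀ x ∈ V ∩ U, DifferentiableAt ℝ φ x := fun x hx =>
    (hφV.differentiableOn (by norm_num)).differentiableAt (hVo.mem_nhds hx.1)
  have hdψ : ∀ x ∈ V ∩ U, DifferentiableAt ℝ ψ x := fun x hx =>
    (hψU.differentiableOn (by norm_num)).differentiableAt (hUo.mem_nhds hx.2)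
  have hev : deriv (fun t => φ t + ψ t) =ᶠ[nhds (0:ℝ)]
      (fun t => deriv φ t + deriv ψ t) := by
    filter_upwards [hWo.mem_nhds h0W] with x hx
    exact deriv_add (hdφ x hx) (hdψ x hx)
  rw [Filter.EventuallyEq.deriv_eq hev]
  have hdφ' : DifferentiableAt ℝ (deriv φ) 0 :=
    ((hφV.deriv_of_isOpen hVo (m := 1) le_rfl).differentiableOn
      one_ne_zero).differentiableAt (hVo.mem_nhds h0V)
  have hdψ' : DifferentiableAt ℝ (deriv ψ) 0 :=
    ((hψU.deriv_of_isOpen hUo (m := 1) le_rfl).differentiableOn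
      one_ne_zero).differentiableAt (hUo.mem_nhds h0U)
  exact deriv_add hdφ' hdψ'

lemma deriv2_const_mul (c : ℝ) (φ : ℝ → ℝ) :
    deriv (deriv (fun t => c * φ t)) 0 = c * deriv (deriv φ) 0 := by
  have h1 : (deriv fun t => c * φ t) = fun t => c * deriv φ t := by
    funext t; exact deriv_const_mul_field c
  rw [h1, deriv_const_mul_field c]

lemma deriv2_sub (φ ψ : ℝ → ℝ) (hφ : ContDiffAt ℝ 2 φ 0) (hψ : ContDiffAt ℝ 2 ψ 0) :
    deriv (deriv (fun t => φ t - ψ t)) 0 = deriv (deriv φ) 0 - deriv (deriv ψ) 0 := by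
  have h : (fun t => φ t - ψ t) = fun t => φ t + (-1) * ψ t := by funext t; ring
  rw [h, deriv2_add φ (fun t => (-1) * ψ t) hφ (contDiffAt_const.mul hψ),
    deriv2_const_mul]
  ring

lemma deriv2_nonpos_of_isLocalMax {φ : ℝ → ℝ} (hφ : ContDiffAt ℝ 2 φ 0)
    (hmax : IsLocalMax φ 0) : deriv (deriv φ) 0 ≤ 0 := by
  by_contra hpos
  push_neg at hpos
  obtain ⟨V, hVo, h0V, hφV⟩ := exists_open_contDiffOn φ hφ
  have hcont2 : ContinuousAt (deriv (deriv φ)) 0 := by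
    have h1 : ContDiffOn ℝ 1 (deriv φ) V := hφV.deriv_of_isOpen hVo (m := 1) le_rfl
    exact (h1.continuousOn_deriv_of_isOpen hVo le_rfl).continuousAt (hVo.mem_nhds h0V)
  have hev : ∀ᶠ t in nhds (0:ℝ), 0 < deriv (deriv φ) t :=
    continuousAt_const.eventually_lt hcont2 hpos
  obtain ⟨r, hr, hball⟩ := Metric.eventually_nhds_iff_ball.1
    (hev.and ((hVo.eventually_mem h0V).and hmax))
  -- on Ioo (-r) r we have φ'' > 0, membership in V, and φ ≤ φ 0
  have hsub : Set.Ioo (-r) r ⊆ Metric.ball (0:ℝ) r := by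
    intro t ht
    simp only [Metric.mem_ball, Real.dist_eq, sub_zero]
    exact abs_lt.2 ⟨ht.1, ht.2⟩
  have hconv : StrictConvexOn ℝ (Set.Ioo (-r) r) φ := by
    apply strictConvexOn_of_deriv2_pos (convex_Ioo _ _)
    · exact fun t ht => ((hφV.continuousOn).continuousAt
        (hVo.mem_nhds (hball _ (hsub ht)).2.1)).continuousWithinAt
    · intro t ht
      rw [interior_Ioo] at ht
      have := (hball _ (hsub ht)).1
      simpa [Function.iterate_succ, Function.comp] using this
  have hrr : (0:ℝ) < r := hr
  set t := r / 2 with ht_def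
  have htpos : 0 < t := by positivity
  have hmem1 : -t ∈ Set.Ioo (-r) r := by constructor <;> [linarith; linarith]
  have hmem2 : t ∈ Set.Ioo (-r) r := by constructor <;> [linarith; linarith]
  have hne : (-t) ≠ t := by linarith
  have hkey := hconv.2 hmem1 hmem2 hne (by norm_num : (0:ℝ) < (1:ℝ)/2)
    (by norm_num : (0:ℝ) < (1:ℝ)/2) (by norm_num)
  simp only [smul_eq_mul] at hkey
  have hmid : (1:ℝ)/2 * (-t) + (1:ℝ)/2 * t = 0 := by ring
  rw [hmid] at hkey
  have h1 : φ (-t) ≤ φ 0 := (hball _ (hsub hmem1)).2.2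
  have h2 : φ t ≤ φ 0 := (hball _ (hsub hmem2)).2.2
  linarith



variable {F : Type*} [NormedAddCommGroup F] [NormedSpace ℝ F]

lemma line_contDiffAt (x y : F) (f : F → ℝ) (hf : ContDiffAt ℝ 2 f x) :
    ContDiffAt ℝ 2 (fun t : ℝ => f (x + t • y)) 0 := by
  have hline : ContDiff ℝ 2 (fun t : ℝ => x + t • y) :=
    contDiff_const.add (contDiff_id.smul contDiff_const)
  have h0 : x + (0:ℝ) • y = x := by simp
  exact ContDiffAt.comp 0 (by rwa [h0]) hline.contDiffAt

/-- The second derivative along a line equals the second iterated Fréchet derivative. -/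
lemma line_deriv2_eq_iteratedFDeriv (x y : F) (f : F → ℝ) (hf : ContDiffAt ℝ 2 f x) :
    deriv (deriv (fun t : ℝ => f (x + t • y))) 0 = iteratedFDeriv ℝ 2 f x ![y, y] := by
  obtain ⟨u, hu, hcd⟩ := hf.contDiffOn le_rfl (by simp)
  obtain ⟨V, hVu, hVo, hxV⟩ := mem_nhds_iff.1 hu
  have hfV : ContDiffOn ℝ 2 f V := hcd.mono hVu
  have hFV : ContDiffOn ℝ 1 (fderiv ℝ f) V := hfV.fderiv_of_isOpen hVo (m := 1) le_rfl
  have hlin : ∀ t : ℝ, HasDerivAt (fun s : ℝ => x + s • y) y t := by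
    intro t
    simpa using ((hasDerivAt_id t).smul_const y).const_add x
  have hmem : ∀ᶠ t : ℝ in nhds 0, x + t • y ∈ V := by
    have hc : ContinuousAt (fun t : ℝ => x + t • y) 0 :=
      (continuous_const.add (continuous_id.smul continuous_const)).continuousAt
    exact hc (by simpa using hVo.mem_nhds hxV)
  have hder : deriv (fun t : ℝ => f (x + t • y)) =ᶠ[nhds (0:ℝ)]
      fun t => fderiv ℝ f (x + t • y) y := by
    filter_upwards [hmem] with t ht
    have hdf : DifferentiableAt ℝ f (x + t • y) :=
      (hfV.differentiableOn (by norm_num)).differentiableAt (hVo.mem_nhds ht)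
    exact (hdf.hasFDerivAt.comp_hasDerivAt t (hlin t)).deriv
  rw [Filter.EventuallyEq.deriv_eq hder]
  have hdF : DifferentiableAt ℝ (fderiv ℝ f) x :=
    (hFV.differentiableOn one_ne_zero).differentiableAt (hVo.mem_nhds hxV)
  have h0 : x + (0:ℝ) • y = x := by simp
  have hdF' : HasFDerivAt (fderiv ℝ f) (fderiv ℝ (fderiv ℝ f) x) (x + (0:ℝ) • y) := by
    rw [h0]; exact hdF.hasFDerivAt
  have h1 := hdF'.comp_hasDerivAt 0 (hlin 0)
  have h2 : HasDerivAt (fun t : ℝ => fderiv ℝ f (x + t • y) y)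
      ((fderiv ℝ (fderiv ℝ f) x y) y) 0 :=
    (ContinuousLinearMap.apply ℝ ℝ y).hasFDerivAt.comp_hasDerivAt 0 h1
  rw [h2.deriv, iteratedFDeriv_two_apply]
  simp

/-- Second derivative at 0 of `t ↦ f (c + b*t + a*t^2)` when `f` is C¹ with derivative `f'`
which is differentiable with derivative `f''` on `Ioi 0`, and `c > 0`. -/
lemma deriv2_comp_quadratic (f f' f'' : ℝ → ℝ)
    (hf : ∀ u : ℝ, 0 < u → HasDerivAt f (f' u) u)
    (hf' : ∀ u : ℝ, 0 < u → HasDerivAt f' (f'' u) u)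
    (c b a : ℝ) (hc : 0 < c) :
    deriv (deriv (fun t : ℝ => f (c + b * t + a * t ^ 2))) 0
      = f'' c * b ^ 2 + f' c * (2 * a) := by
  set q : ℝ → ℝ := fun t => c + b * t + a * t ^ 2 with hq_def
  have hq : ∀ t, HasDerivAt q (b + a * (2 * t)) t := by
    intro t
    have h1 : HasDerivAt (fun t : ℝ => b * t) b t := by
      simpa using (hasDerivAt_id t).const_mul b
    have h2 : HasDerivAt (fun t : ℝ => a * t ^ 2) (a * (2 * t)) t := by
      simpa using (hasDerivAt_pow 2 t).const_mul a
    exact ((h1.const_add c).fun_add h2)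
  have hq0 : q 0 = c := by simp [hq_def]
  have hqc : ContinuousAt q 0 := (hq 0).continuousAt
  have hmem : ∀ᶠ t : ℝ in nhds 0, 0 < q t := by
    have : ∀ᶠ u : ℝ in nhds (q 0), 0 < u := by
      rw [hq0]; exact eventually_gt_nhds hc
    exact hqc.eventually this
  have hder : deriv (fun t => f (q t)) =ᶠ[nhds (0:ℝ)]
      fun t => f' (q t) * (b + a * (2 * t)) := by
    filter_upwards [hmem] with t ht
    exact ((hf (q t) ht).comp t (hq t)).deriv
  rw [Filter.EventuallyEq.deriv_eq hder]
  have h1 : HasDerivAt (fun t : ℝ => f' (q t)) (f'' c * b) 0 := by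
    have := (hf' (q 0) (by rw [hq0]; exact hc)).comp 0 (hq 0)
    simpa [hq0, Function.comp_def] using this
  have h2 : HasDerivAt (fun t : ℝ => b + a * (2 * t)) (2 * a) 0 := by
    have := ((hasDerivAt_id (0:ℝ)).const_mul (2:ℝ)).const_mul a
    simpa [mul_comm, mul_assoc, mul_left_comm] using ((((hasDerivAt_id (0:ℝ)).const_mul (2:ℝ)).const_mul a).const_add b)
  have h3 := h1.fun_mul h2
  rw [h3.deriv]
  simp [hq0]
  ring



variable {n : ℕ}

lemma Msymm_apply {M : Matrix (Fin n) (Fin n) ℝ} (h : Mᵀ = M) (i j : Fin n) :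
    M i j = M j i := by
  conv_lhs => rw [← h]
  exact Matrix.transpose_apply M i j

lemma dotProduct_expand (B : Matrix (Fin n) (Fin n) ℝ) (x y : Fin n → ℝ) :
    x ⬝ᵥ B.mulVec y = ∑ i, ∑ j, B i j * x i * y j := by
  simp only [dotProduct, Matrix.mulVec, Finset.mul_sum]
  exact Finset.sum_congr rfl fun i _ => Finset.sum_congr rfl fun j _ => by ring

section
variable (a B S : Matrix (Fin n) (Fin n) ℝ)
variable (hBsymm : Bᵀ = B) (hSsymm : Sᵀ = S) (hSS : S * S = a) (hBa : B * a = 1)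

include hBsymm hSsymm hSS hBa in
lemma sum_Bl_row_sq (x : Fin n → ℝ) :
    ∑ k, (x ⬝ᵥ B.mulVec (S k)) ^ 2 = x ⬝ᵥ B.mulVec x := by
  have hrow : ∀ k, x ⬝ᵥ B.mulVec (S k) = ((S * B).mulVec x) k := by
    intro k
    rw [dotProduct_expand]
    simp only [Matrix.mulVec, dotProduct, Matrix.mul_apply, Finset.sum_mul]
    refine Finset.sum_congr rfl fun i _ => Finset.sum_congr rfl fun j _ => ?_
    rw [Msymm_apply hBsymm i j]; ring
  calc ∑ k, (x ⬝ᵥ B.mulVec (S k)) ^ 2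
      = ((S * B).mulVec x) ⬝ᵥ ((S * B).mulVec x) := by
        rw [dotProduct]
        exact Finset.sum_congr rfl fun k _ => by rw [hrow k, sq]
    _ = x ⬝ᵥ B.mulVec x := by
        rw [Matrix.dotProduct_mulVec]
        have h1 : vecMul ((S * B).mulVec x) (S * B) = ((S * B)ᵀ * (S * B)).mulVec x := by
          rw [← Matrix.mulVec_transpose, Matrix.mulVec_mulVec]
        rw [h1]
        have h2 : (S * B)ᵀ * (S * B) = B := by
          rw [Matrix.transpose_mul, hBsymm, hSsymm]
          calc B * S * (S * B) = B * (S * S) * B := by noncomm_ring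
            _ = B * a * B := by rw [hSS]
            _ = B := by rw [hBa, Matrix.one_mul]
        rw [h2]
        exact dotProduct_comm _ _
  end

section
variable (a B S : Matrix (Fin n) (Fin n) ℝ)
variable (hBsymm : Bᵀ = B) (hSsymm : Sᵀ = S) (hSS : S * S = a) (hBa : B * a = 1)

include hSsymm hSS hBa in
lemma sum_Q_row : ∑ k, ((S k) ⬝ᵥ B.mulVec (S k)) = (n : ℝ) := by
  have hdiag : ∀ k, (S k) ⬝ᵥ B.mulVec (S k) = (S * (B * S)) k k := by
    intro k
    simp only [dotProduct, Matrix.mulVec, Matrix.mul_apply]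
    refine Finset.sum_congr rfl fun m _ => ?_
    rw [Finset.mul_sum, Finset.mul_sum]
    refine Finset.sum_congr rfl fun j _ => ?_
    rw [show S j k = S k j from Msymm_apply hSsymm j k]
  calc ∑ k, ((S k) ⬝ᵥ B.mulVec (S k)) = Matrix.trace (S * (B * S)) := by
        rw [Matrix.trace]
        exact Finset.sum_congr rfl fun k _ => hdiag k
    _ = (n : ℝ) := by
        rw [Matrix.trace_mul_comm, Matrix.mul_assoc, hSS, hBa]
        simp

include hSsymm hSS in
lemma sum_row_outer (i j : Fin n) : ∑ k, S k i * S k j = a i j := by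
  calc ∑ k, S k i * S k j = ∑ k, S i k * S k j :=
        Finset.sum_congr rfl fun k _ => by rw [Msymm_apply hSsymm k i]
    _ = (S * S) i j := (Matrix.mul_apply).symm
    _ = a i j := by rw [hSS]

end

open scoped MatrixOrder in
lemma exists_sqrt_inv (a : Matrix (Fin n) (Fin n) ℝ) (haSymm : a.IsSymm) (haPos : a.PosDef) :
    ∃ B S : Matrix (Fin n) (Fin n) ℝ, Bᵀ = B ∧ Sᵀ = S ∧ S * S = a ∧ B * a = 1 ∧
      B.PosDef := by
  refine ⟨a⁻¹, CFC.sqrt a, ?_, ?_, ?_, ?_, haPos.inv⟩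
  · rw [Matrix.transpose_nonsing_inv, haSymm.eq]
  · have h := (CFC.sqrt_nonneg a).posSemidef.1
    simpa [Matrix.IsHermitian, Matrix.conjTranspose_eq_transpose_of_trivial] using h
  · exact CFC.sqrt_mul_sqrt_self a haPos.posSemidef.nonneg
  · exact Matrix.nonsing_inv_mul a haPos.det_pos.ne'.isUnit



variable {n : ℕ}

local notation "E" => EuclideanSpace ℝ (Fin n)

/-- quadratic form of `B` on Euclidean space -/
noncomputable def Qe (B : Matrix (Fin n) (Fin n) ℝ) (x : E) : ℝ := ∑ i, ∑ j, B i j * x i * x j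

/-- bilinear form of `B` on Euclidean space -/
noncomputable def Ble (B : Matrix (Fin n) (Fin n) ℝ) (x y : E) : ℝ := ∑ i, ∑ j, B i j * x i * y j

lemma Qe_eq_dot (B : Matrix (Fin n) (Fin n) ℝ) (x : E) :
    Qe B x = (fun i => x i) ⬝ᵥ B.mulVec (fun i => x i) := (dotProduct_expand B _ _).symm

lemma Ble_eq_dot (B : Matrix (Fin n) (Fin n) ℝ) (x y : E) :
    Ble B x y = (fun i => x i) ⬝ᵥ B.mulVec (fun i => y i) := (dotProduct_expand B _ _).symm

lemma Qe_expand (B : Matrix (Fin n) (Fin n) ℝ) (hB : Bᵀ = B) (x y : E) (t : ℝ) :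
    Qe B (x + t • y) = Qe B x + (2 * Ble B x y) * t + (Qe B y) * t ^ 2 := by
  have hcross : ∑ i, ∑ j, B i j * y i * x j = Ble B x y := by
    rw [Finset.sum_comm]
    refine Finset.sum_congr rfl fun i _ => Finset.sum_congr rfl fun j _ => ?_
    rw [Msymm_apply hB j i]; ring
  have step1 : Qe B (x + t • y)
      = ∑ i, ∑ j, (B i j * x i * x j + t * (B i j * x i * y j)
          + t * (B i j * y i * x j) + t ^ 2 * (B i j * y i * y j)) := by
    refine Finset.sum_congr rfl fun i _ => Finset.sum_congr rfl fun j _ => ?_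
    simp only [PiLp.add_apply, PiLp.smul_apply, smul_eq_mul]
    ring
  rw [step1]
  simp only [Finset.sum_add_distrib, ← Finset.mul_sum]
  rw [hcross]
  simp only [Qe, Ble]
  ring

lemma Qe_smul (B : Matrix (Fin n) (Fin n) ℝ) (c : ℝ) (x : E) :
    Qe B (c • x) = c ^ 2 * Qe B x := by
  simp only [Qe, PiLp.smul_apply, smul_eq_mul, Finset.mul_sum]
  exact Finset.sum_congr rfl fun i _ => Finset.sum_congr rfl fun j _ => by ring

lemma Qe_pos (B : Matrix (Fin n) (Fin n) ℝ) (hB : B.PosDef) (x : E) (hx : x ≠ 0) :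
    0 < Qe B x := by
  rw [Qe_eq_dot]
  have hx' : (fun i => x i) ≠ (0 : Fin n → ℝ) := by
    intro hcon
    apply hx
    ext i
    exact congrFun hcon i
  have := hB.dotProduct_mulVec_pos hx'
  simpa using this

lemma Qe_continuous (B : Matrix (Fin n) (Fin n) ℝ) : Continuous (Qe B) := by
  unfold Qe
  refine continuous_finset_sum _ fun i _ => continuous_finset_sum _ fun j _ => ?_
  exact (continuous_const.mul (EuclideanSpace.proj i).continuous).mul
    (EuclideanSpace.proj j).continuous

lemma Qe_contDiff (B : Matrix (Fin n) (Fin n) ℝ) : ContDiff ℝ 2 (Qe B) := by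
  unfold Qe
  refine ContDiff.sum fun i _ => ContDiff.sum fun j _ => ?_
  have hi : ContDiff ℝ 2 (fun x : E => x i) := by
    have := (EuclideanSpace.proj (𝕜 := ℝ) i).contDiff (n := 2); exact this
  have hj : ContDiff ℝ 2 (fun x : E => x j) := by
    have := (EuclideanSpace.proj (𝕜 := ℝ) j).contDiff (n := 2); exact this
  have hc : ContDiff ℝ 2 (fun _ : E => B i j) := contDiff_const
  exact (hc.mul hi).mul hj

/-- comparison of the quadratic form with the norm. -/
lemma Qe_comparable (B : Matrix (Fin n) (Fin n) ℝ) (hB : B.PosDef) (hn : 0 < n) :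
    ∃ cB CB : ℝ, 0 < cB ∧ 0 < CB ∧ ∀ x : E,
      cB * ‖x‖ ^ 2 ≤ Qe B x ∧ Qe B x ≤ CB * ‖x‖ ^ 2 := by
  haveI : Nonempty (Fin n) := ⟨⟨0, hn⟩⟩
  haveI : Nontrivial E := by
    refine ⟨EuclideanSpace.single ⟨0, hn⟩ (1:ℝ), 0, ?_⟩
    intro hcon
    have := congrArg (fun v : E => v ⟨0, hn⟩) hcon
    simp [EuclideanSpace.single_apply] at this
  have hsph : (Metric.sphere (0:E) 1).Nonempty := NormedSpace.sphere_nonempty.2 zero_le_one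
  have hcpt : IsCompact (Metric.sphere (0:E) 1) := isCompact_sphere 0 1
  obtain ⟨u, hu, humin⟩ := hcpt.exists_isMinOn hsph (Qe_continuous B).continuousOn
  obtain ⟨v, hv, hvmax⟩ := hcpt.exists_isMaxOn hsph (Qe_continuous B).continuousOn
  have hune : u ≠ 0 := by
    intro hcon; rw [hcon] at hu; simp at hu
  refine ⟨Qe B u, Qe B v, Qe_pos B hB u hune, ?_, ?_⟩
  · have hvne : v ≠ 0 := by intro hcon; rw [hcon] at hv; simp at hv
    exact Qe_pos B hB v hvne
  · intro x
    rcases eq_or_ne x 0 with rfl | hx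
    · simp [Qe]
    · have hnx : (0:ℝ) < ‖x‖ := norm_pos_iff.2 hx
      set w : E := ‖x‖⁻¹ • x with hw_def
      have hwsph : w ∈ Metric.sphere (0:E) 1 := by
        simp [hw_def, norm_smul, abs_inv, abs_of_pos hnx, inv_mul_cancel₀ hnx.ne']
      have hxw : x = ‖x‖ • w := by
        rw [hw_def, smul_smul, mul_inv_cancel₀ hnx.ne', one_smul]
      have hQx : Qe B x = ‖x‖ ^ 2 * Qe B w := by
        conv_lhs => rw [hxw]
        rw [Qe_smul]
      constructor
      · rw [hQx]
        have h := humin hwsph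
        simp only [Set.mem_setOf_eq] at h
        nlinarith [sq_nonneg ‖x‖]
      · rw [hQx]
        have h := hvmax hwsph
        simp only [Set.mem_setOf_eq] at h
        nlinarith [sq_nonneg ‖x‖]


/-- the `k`-th row of `S` as a vector in Euclidean space. -/
noncomputable def rowVec (S : Matrix (Fin n) (Fin n) ℝ) (k : Fin n) : EuclideanSpace ℝ (Fin n) :=
  (WithLp.equiv 2 (Fin n → ℝ)).symm (S k)

@[simp] lemma rowVec_apply (S : Matrix (Fin n) (Fin n) ℝ) (k i : Fin n) :
    rowVec S k i = S k i := rfl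

lemma euclid_decomp (y : E) : y = ∑ i, y i • EuclideanSpace.single i (1:ℝ) := by
  have h := (EuclideanSpace.basisFun (Fin n) ℝ).sum_repr y
  simp only [EuclideanSpace.basisFun_repr, EuclideanSpace.basisFun_apply] at h
  exact h.symm

lemma bilinear_expand (Φ : E →L[ℝ] E →L[ℝ] ℝ) (y z : E) :
    Φ y z = ∑ i, ∑ j, y i * z j *
      Φ (EuclideanSpace.single i 1) (EuclideanSpace.single j 1) := by
  have h1 : ∀ w : E, Φ y w = ∑ i, y i * Φ (EuclideanSpace.single i 1) w := by
    intro w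
    conv_lhs => rw [euclid_decomp y]
    rw [map_sum, ContinuousLinearMap.sum_apply]
    exact Finset.sum_congr rfl fun i _ => by
      rw [_root_.map_smul, ContinuousLinearMap.smul_apply, smul_eq_mul]
  have h2 : ∀ v : EuclideanSpace ℝ (Fin n) →L[ℝ] ℝ,
      v z = ∑ j, z j * v (EuclideanSpace.single j 1) := by
    intro v
    conv_lhs => rw [euclid_decomp z]
    rw [map_sum]
    exact Finset.sum_congr rfl fun j _ => by rw [_root_.map_smul, smul_eq_mul]
  rw [h1 z]
  refine Finset.sum_congr rfl fun i _ => ?_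
  rw [h2 (Φ (EuclideanSpace.single i 1)), Finset.mul_sum]
  exact Finset.sum_congr rfl fun j _ => by ring

lemma LL_eq_sum_a (a S : Matrix (Fin n) (Fin n) ℝ)
    (hSsymm : Sᵀ = S) (hSS : S * S = a) (f : E → ℝ) (x : E) (hf : ContDiffAt ℝ 2 f x) :
    ∑ k, deriv (deriv (fun t : ℝ => f (x + t • rowVec S k))) 0
      = ∑ i, ∑ j, a i j * iteratedFDeriv ℝ 2 f x
          ![EuclideanSpace.single i 1, EuclideanSpace.single j 1] := by
  set Φ := fderiv ℝ (fderiv ℝ f) x with hΦ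
  have hiter : ∀ y z : E, iteratedFDeriv ℝ 2 f x ![y, z] = Φ y z := by
    intro y z
    rw [iteratedFDeriv_two_apply]
    simp [hΦ]
  have hterm : ∀ k, deriv (deriv (fun t : ℝ => f (x + t • rowVec S k))) 0
      = Φ (rowVec S k) (rowVec S k) := by
    intro k
    rw [line_deriv2_eq_iteratedFDeriv x (rowVec S k) f hf, hiter]
  calc ∑ k, deriv (deriv (fun t : ℝ => f (x + t • rowVec S k))) 0
      = ∑ k, ∑ i, ∑ j, S k i * S k j *
          Φ (EuclideanSpace.single i 1) (EuclideanSpace.single j 1) := by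
        refine Finset.sum_congr rfl fun k _ => ?_
        rw [hterm k, bilinear_expand]
        exact Finset.sum_congr rfl fun i _ => Finset.sum_congr rfl fun j _ => by
          rw [rowVec_apply, rowVec_apply]
    _ = ∑ i, ∑ j, (∑ k, S k i * S k j) *
          Φ (EuclideanSpace.single i 1) (EuclideanSpace.single j 1) := by
        rw [Finset.sum_comm]
        refine Finset.sum_congr rfl fun i _ => ?_
        rw [Finset.sum_comm]
        refine Finset.sum_congr rfl fun j _ => ?_
        rw [Finset.sum_mul]
    _ = ∑ i, ∑ j, a i j * iteratedFDeriv ℝ 2 f x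
          ![EuclideanSpace.single i 1, EuclideanSpace.single j 1] := by
        refine Finset.sum_congr rfl fun i _ => Finset.sum_congr rfl fun j _ => ?_
        rw [sum_row_outer a S hSsymm hSS, hiter]

lemma LL_comp_Qe (a B S : Matrix (Fin n) (Fin n) ℝ)
    (hBsymm : Bᵀ = B) (hSsymm : Sᵀ = S) (hSS : S * S = a) (hBa : B * a = 1)
    (φ φ' φ'' : ℝ → ℝ)
    (hφ : ∀ u : ℝ, 0 < u → HasDerivAt φ (φ' u) u)
    (hφ' : ∀ u : ℝ, 0 < u → HasDerivAt φ' (φ'' u) u)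
    (x : E) (hx : 0 < Qe B x) :
    ∑ k, deriv (deriv (fun t : ℝ => φ (Qe B (x + t • rowVec S k)))) 0
      = φ'' (Qe B x) * (4 * Qe B x) + φ' (Qe B x) * (2 * n) := by
  have hrowf : ∀ k, (fun i => rowVec S k i) = S k := by
    intro k; funext i; simp
  have hterm : ∀ k, deriv (deriv (fun t : ℝ => φ (Qe B (x + t • rowVec S k)))) 0
      = φ'' (Qe B x) * (2 * Ble B x (rowVec S k)) ^ 2
        + φ' (Qe B x) * (2 * Qe B (rowVec S k)) := by
    intro k
    have hfun : (fun t : ℝ => φ (Qe B (x + t • rowVec S k)))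
        = fun t : ℝ => φ (Qe B x + (2 * Ble B x (rowVec S k)) * t
            + (Qe B (rowVec S k)) * t ^ 2) := by
      funext t
      rw [Qe_expand B hBsymm]
    rw [hfun]
    exact deriv2_comp_quadratic φ φ' φ'' hφ hφ' _ _ _ hx
  have hBl : ∑ k, (Ble B x (rowVec S k)) ^ 2 = Qe B x := by
    have : ∀ k, Ble B x (rowVec S k) = (fun i => x i) ⬝ᵥ B.mulVec (S k) := by
      intro k
      rw [Ble_eq_dot, hrowf k]
    simp only [this]
    rw [sum_Bl_row_sq a B S hBsymm hSsymm hSS hBa, ← Qe_eq_dot]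
  have hQrow : ∑ k, Qe B (rowVec S k) = (n : ℝ) := by
    have : ∀ k, Qe B (rowVec S k) = (S k) ⬝ᵥ B.mulVec (S k) := by
      intro k
      rw [Qe_eq_dot, hrowf k]
    simp only [this]
    exact sum_Q_row a B S hSsymm hSS hBa
  calc ∑ k, deriv (deriv (fun t : ℝ => φ (Qe B (x + t • rowVec S k)))) 0
      = ∑ k, (φ'' (Qe B x) * (2 * Ble B x (rowVec S k)) ^ 2
          + φ' (Qe B x) * (2 * Qe B (rowVec S k))) :=
        Finset.sum_congr rfl fun k _ => hterm k
    _ = φ'' (Qe B x) * (4 * Qe B x) + φ' (Qe B x) * (2 * n) := by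
        rw [Finset.sum_add_distrib]
        have e1 : ∑ k, φ'' (Qe B x) * (2 * Ble B x (rowVec S k)) ^ 2
            = φ'' (Qe B x) * (4 * Qe B x) := by
          have h : ∑ k, φ'' (Qe B x) * (2 * Ble B x (rowVec S k)) ^ 2
              = φ'' (Qe B x) * 4 * ∑ k, (Ble B x (rowVec S k)) ^ 2 := by
            rw [Finset.mul_sum]
            exact Finset.sum_congr rfl fun k _ => by ring
          rw [h, hBl]; ring
        have e2 : ∑ k, φ' (Qe B x) * (2 * Qe B (rowVec S k))
            = φ' (Qe B x) * (2 * n) := by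
          have h : ∑ k, φ' (Qe B x) * (2 * Qe B (rowVec S k))
              = φ' (Qe B x) * 2 * ∑ k, Qe B (rowVec S k) := by
            rw [Finset.mul_sum]
            exact Finset.sum_congr rfl fun k _ => by ring
          rw [h, hQrow]; ring
        rw [e1, e2]



end helpers

section mp

variable {n : ℕ}

lemma maximum_principle (Sv : Fin n → EuclideanSpace ℝ (Fin n))
    (u W P : EuclideanSpace ℝ (Fin n) → ℝ) (R₀ : ℝ) (hR₀ : 0 < R₀)
    (hu2 : ∀ x : EuclideanSpace ℝ (Fin n), R₀ ≤ ‖x‖ → ContDiffAt ℝ 2 u x)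
    (hW2 : ∀ x : EuclideanSpace ℝ (Fin n), R₀ ≤ ‖x‖ → ContDiffAt ℝ 2 W x)
    (hP2 : ∀ x : EuclideanSpace ℝ (Fin n), ContDiffAt ℝ 2 P x)
    (hPnn : ∀ x : EuclideanSpace ℝ (Fin n), 0 ≤ P x)
    (hPpos : ∀ x : EuclideanSpace ℝ (Fin n), R₀ < ‖x‖ →
      0 < ∑ k, deriv (deriv (fun t : ℝ => P (x + t • Sv k))) 0)
    (hLuW : ∀ x : EuclideanSpace ℝ (Fin n), R₀ < ‖x‖ →
      0 ≤ ∑ k, deriv (deriv (fun t : ℝ => u (x + t • Sv k) - W (x + t • Sv k))) 0)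
    (hWnn : ∀ x : EuclideanSpace ℝ (Fin n), R₀ ≤ ‖x‖ → 0 ≤ W x)
    (hinner : ∀ x : EuclideanSpace ℝ (Fin n), ‖x‖ = R₀ → u x ≤ W x)
    (hulim : ∀ ε > (0:ℝ), ∃ R, ∀ x : EuclideanSpace ℝ (Fin n), R ≤ ‖x‖ → u x < ε) :
    ∀ x : EuclideanSpace ℝ (Fin n), R₀ ≤ ‖x‖ → u x ≤ W x := by
  intro x₀ hx₀
  have hmain : ∀ ε > (0:ℝ), u x₀ ≤ W x₀ + ε := by
    intro ε hε
    obtain ⟨Rε, hRε⟩ := hulim ε hε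
    set R₂ : ℝ := max ‖x₀‖ (max Rε (R₀ + 1)) with hR₂def
    have hR₂x₀ : ‖x₀‖ ≤ R₂ := le_max_left _ _
    have hR₂Rε : Rε ≤ R₂ := le_trans (le_max_left _ _) (le_max_right _ _)
    have hR₂R₀ : R₀ < R₂ := lt_of_lt_of_le (by linarith) (le_trans (le_max_right _ _) (le_max_right _ _))
    set K : Set (EuclideanSpace ℝ (Fin n)) :=
      Metric.closedBall 0 R₂ ∩ (Metric.ball 0 R₀)ᶜ with hKdef
    have hmemK : ∀ x : EuclideanSpace ℝ (Fin n), x ∈ K ↔ (R₀ ≤ ‖x‖ ∧ ‖x‖ ≤ R₂) := by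
      intro x
      simp [hKdef, mem_closedBall_zero_iff, mem_ball_zero_iff, not_lt, and_comm]
    have hK : IsCompact K :=
      (isCompact_closedBall _ _).inter_right (Metric.isOpen_ball).isClosed_compl
    have hx₀K : x₀ ∈ K := (hmemK x₀).2 ⟨hx₀, hR₂x₀⟩
    have hKne : K.Nonempty := ⟨x₀, hx₀K⟩
    have hcontu : ContinuousOn u K := fun x hx =>
      ((hu2 x ((hmemK x).1 hx).1).continuousAt).continuousWithinAt
    have hcontW : ContinuousOn W K := fun x hx =>
      ((hW2 x ((hmemK x).1 hx).1).continuousAt).continuousWithinAt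
    have hcontP : ContinuousOn P K := fun x hx => ((hP2 x).continuousAt).continuousWithinAt
    obtain ⟨zP, _, hzPmax⟩ := hK.exists_isMaxOn hKne hcontP
    set CP : ℝ := max 0 (P zP) with hCPdef
    have hCP0 : 0 ≤ CP := le_max_left _ _
    have hCPb : ∀ x ∈ K, P x ≤ CP := fun x hx => le_trans (hzPmax hx) (le_max_right _ _)
    have main : ∀ η : ℝ, 0 < η → u x₀ - W x₀ + η * P x₀ ≤ ε + η * CP := by
      intro η hη
      set v : EuclideanSpace ℝ (Fin n) → ℝ := fun x => u x - W x + η * P x with hvdef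
      have hcontv : ContinuousOn v K :=
        (hcontu.sub hcontW).add (continuousOn_const.mul hcontP)
      obtain ⟨z, hzK, hzmax⟩ := hK.exists_isMaxOn hKne hcontv
      have hzR : R₀ ≤ ‖z‖ ∧ ‖z‖ ≤ R₂ := (hmemK z).1 hzK
      have hzb : ‖z‖ = R₀ ∨ ‖z‖ = R₂ := by
        by_contra hcon
        push_neg at hcon
        have h1 : R₀ < ‖z‖ := lt_of_le_of_ne hzR.1 (Ne.symm hcon.1)
        have h2 : ‖z‖ < R₂ := lt_of_le_of_ne hzR.2 hcon.2
        -- interior maximum: contradiction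
        have hOopen : IsOpen {x : EuclideanSpace ℝ (Fin n) | R₀ < ‖x‖ ∧ ‖x‖ < R₂} := by
          have : {x : EuclideanSpace ℝ (Fin n) | R₀ < ‖x‖ ∧ ‖x‖ < R₂}
              = (fun x : EuclideanSpace ℝ (Fin n) => ‖x‖) ⁻¹' (Set.Ioo R₀ R₂) := rfl
          rw [this]
          exact continuous_norm.isOpen_preimage _ isOpen_Ioo
        have hKnhds : K ∈ nhds z := by
          apply Filter.mem_of_superset (hOopen.mem_nhds ⟨h1, h2⟩)
          intro x hx
          exact (hmemK x).2 ⟨le_of_lt hx.1, le_of_lt hx.2⟩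
        have hloc : IsLocalMax v z := hzmax.isLocalMax hKnhds
        have hz' : R₀ ≤ ‖z‖ := hzR.1
        have hline : ∀ k, IsLocalMax (fun t : ℝ => v (z + t • Sv k)) 0 := by
          intro k
          have hcont : ContinuousAt (fun t : ℝ => z + t • Sv k) 0 :=
            (continuous_const.add (continuous_id.smul continuous_const)).continuousAt
          have ht : Filter.Tendsto (fun t : ℝ => z + t • Sv k) (nhds 0) (nhds z) := by
            simpa using hcont.tendsto
          have hev := ht.eventually hloc
          have h0 : z + (0:ℝ) • Sv k = z := by simp
          unfold IsLocalMax IsMaxFilter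
          simpa [h0] using hev
        have hvC2 : ContDiffAt ℝ 2 v z :=
          ((hu2 z hz').sub (hW2 z hz')).add ((contDiffAt_const (c := η)).mul (hP2 z))
        have hd2 : ∀ k, deriv (deriv (fun t : ℝ => v (z + t • Sv k))) 0 ≤ 0 := fun k =>
          deriv2_nonpos_of_isLocalMax (line_contDiffAt z (Sv k) v hvC2) (hline k)
        have hsplit : ∀ k, deriv (deriv (fun t : ℝ => v (z + t • Sv k))) 0
            = deriv (deriv (fun t : ℝ => u (z + t • Sv k) - W (z + t • Sv k))) 0
              + η * deriv (deriv (fun t : ℝ => P (z + t • Sv k))) 0 := by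
          intro k
          have h1 : ContDiffAt ℝ 2 (fun t : ℝ => u (z + t • Sv k) - W (z + t • Sv k)) 0 :=
            line_contDiffAt z (Sv k) (fun x => u x - W x) ((hu2 z hz').sub (hW2 z hz'))
          have h2 : ContDiffAt ℝ 2 (fun t : ℝ => P (z + t • Sv k)) 0 :=
            line_contDiffAt z (Sv k) P (hP2 z)
          have hadd := deriv2_add _ _ h1 ((contDiffAt_const (c := η)).mul h2)
          calc deriv (deriv (fun t : ℝ => v (z + t • Sv k))) 0
              = deriv (deriv (fun t : ℝ => (u (z + t • Sv k) - W (z + t • Sv k))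
                  + η * P (z + t • Sv k))) 0 := rfl
            _ = deriv (deriv (fun t : ℝ => u (z + t • Sv k) - W (z + t • Sv k))) 0
                + deriv (deriv (fun t : ℝ => η * P (z + t • Sv k))) 0 := hadd
            _ = deriv (deriv (fun t : ℝ => u (z + t • Sv k) - W (z + t • Sv k))) 0
                + η * deriv (deriv (fun t : ℝ => P (z + t • Sv k))) 0 := by
                rw [deriv2_const_mul]
        have hsum0 : ∑ k, deriv (deriv (fun t : ℝ => v (z + t • Sv k))) 0 ≤ 0 :=
          Finset.sum_nonpos fun k _ => hd2 k
        have hsum1 : ∑ k, deriv (deriv (fun t : ℝ => v (z + t • Sv k))) 0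
            = (∑ k, deriv (deriv (fun t : ℝ => u (z + t • Sv k) - W (z + t • Sv k))) 0)
              + η * ∑ k, deriv (deriv (fun t : ℝ => P (z + t • Sv k))) 0 := by
          rw [Finset.mul_sum]
          rw [← Finset.sum_add_distrib]
          exact Finset.sum_congr rfl fun k _ => hsplit k
        have hpos : 0 < (∑ k, deriv (deriv (fun t : ℝ => u (z + t • Sv k) - W (z + t • Sv k))) 0)
            + η * ∑ k, deriv (deriv (fun t : ℝ => P (z + t • Sv k))) 0 :=
          add_pos_of_nonneg_of_pos (hLuW z h1) (mul_pos hη (hPpos z h1))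
        rw [hsum1] at hsum0
        linarith
      have hvx₀ : v x₀ ≤ v z := hzmax hx₀K
      have hvz : v z ≤ ε + η * CP := by
        rcases hzb with hb | hb
        · have h1 : u z ≤ W z := hinner z hb
          have h2 : P z ≤ CP := hCPb z hzK
          have : v z ≤ η * CP := by
            simp only [hvdef]
            nlinarith
          linarith
        · have h1 : u z < ε := hRε z (by rw [hb]; exact hR₂Rε)
          have h2 : 0 ≤ W z := hWnn z hzR.1
          have h3 : P z ≤ CP := hCPb z hzK
          simp only [hvdef]
          nlinarith
      calc u x₀ - W x₀ + η * P x₀ = v x₀ := rfl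
        _ ≤ v z := hvx₀
        _ ≤ ε + η * CP := hvz
    -- let η → 0
    have hfinal : u x₀ - W x₀ ≤ ε := by
      by_contra hcon
      push_neg at hcon
      set η : ℝ := (u x₀ - W x₀ - ε) / (2 * (CP + 1)) with hηdef
      have hηpos : 0 < η := by
        apply div_pos
        · linarith
        · linarith
      have h := main η hηpos
      have hP0 : 0 ≤ η * P x₀ := mul_nonneg hηpos.le (hPnn x₀)
      have hCPle : η * CP ≤ (u x₀ - W x₀ - ε) / 2 := by
        rw [hηdef]
        rw [div_mul_eq_mul_div, div_le_div_iff₀ (by linarith) (by norm_num)]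
        nlinarith
      linarith
    linarith
  exact le_of_forall_pos_le_add hmain
end mp

section barriers

open Real

lemma hasDeriv_rpow1 (s : ℝ) : ∀ u : ℝ, 0 < u →
    HasDerivAt (fun u : ℝ => u ^ s) (s * u ^ (s - 1)) u := fun u hu =>
  Real.hasDerivAt_rpow_const (Or.inl hu.ne')

lemma hasDeriv_rpow2 (s : ℝ) : ∀ u : ℝ, 0 < u →
    HasDerivAt (fun u : ℝ => s * u ^ (s - 1)) (s * (s - 1) * u ^ (s - 2)) u := by
  intro u hu
  have h := (Real.hasDerivAt_rpow_const (p := s - 1) (Or.inl hu.ne')).const_mul s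
  have he : s * ((s - 1) * u ^ (s - 1 - 1)) = s * (s - 1) * u ^ (s - 2) := by
    rw [show s - 1 - 1 = s - 2 by ring]; ring
  rwa [he] at h

lemma hasDeriv_rpowlog1 (s : ℝ) : ∀ u : ℝ, 0 < u →
    HasDerivAt (fun u : ℝ => u ^ s * Real.log u)
      (s * u ^ (s - 1) * Real.log u + u ^ (s - 1)) u := by
  intro u hu
  have h := (Real.hasDerivAt_rpow_const (p := s) (Or.inl hu.ne')).mul
    (Real.hasDerivAt_log hu.ne')
  have he : s * u ^ (s - 1) * Real.log u + u ^ s * u⁻¹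
      = s * u ^ (s - 1) * Real.log u + u ^ (s - 1) := by
    rw [Real.rpow_sub_one hu.ne' s]
    field_simp
  rwa [he] at h

lemma hasDeriv_rpowlog2 (s : ℝ) : ∀ u : ℝ, 0 < u →
    HasDerivAt (fun u : ℝ => s * u ^ (s - 1) * Real.log u + u ^ (s - 1))
      (s * (s - 1) * u ^ (s - 2) * Real.log u + (2 * s - 1) * u ^ (s - 2)) u := by
  intro u hu
  have h1 : HasDerivAt (fun u : ℝ => s * u ^ (s - 1) * Real.log u)
      ((s * (s - 1) * u ^ (s - 2)) * Real.log u + (s * u ^ (s - 1)) * u⁻¹) u := by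
    have := ((hasDeriv_rpow2 s u hu).fun_mul (Real.hasDerivAt_log hu.ne'))
    convert this using 2
  have h2 := hasDeriv_rpow1 (s - 1) u hu
  have h := h1.add h2
  have hu1 : u ^ (s - 1) * u⁻¹ = u ^ (s - 2) := by
    rw [show s - 2 = s - 1 - 1 by ring, Real.rpow_sub_one hu.ne' (s - 1)]
    field_simp
  have he : (s * (s - 1) * u ^ (s - 2)) * Real.log u + (s * u ^ (s - 1)) * u⁻¹
      + (s - 1) * u ^ (s - 1 - 1)
      = s * (s - 1) * u ^ (s - 2) * Real.log u + (2 * s - 1) * u ^ (s - 2) := by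
    rw [show s - 1 - 1 = s - 2 by ring]
    rw [show (s * u ^ (s - 1)) * u⁻¹ = s * (u ^ (s - 1) * u⁻¹) by ring, hu1]
    ring
  rwa [he] at h

lemma hasDeriv_id1 : ∀ u : ℝ, 0 < u → HasDerivAt (fun u : ℝ => u) 1 u :=
  fun u _ => hasDerivAt_id u

lemma hasDeriv_id2 : ∀ u : ℝ, 0 < u → HasDerivAt (fun _ : ℝ => (1:ℝ)) 0 u :=
  fun u _ => hasDerivAt_const u 1

end barriers

section llop

variable {n : ℕ}

/-- second order operator along the family of directions `Sv`. -/
noncomputable def LLop (Sv : Fin n → EuclideanSpace ℝ (Fin n))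
    (f : EuclideanSpace ℝ (Fin n) → ℝ) (x : EuclideanSpace ℝ (Fin n)) : ℝ :=
  ∑ k, deriv (deriv (fun t : ℝ => f (x + t • Sv k))) 0

lemma LLop_sub (Sv : Fin n → EuclideanSpace ℝ (Fin n))
    (f W : EuclideanSpace ℝ (Fin n) → ℝ) (x : EuclideanSpace ℝ (Fin n))
    (hf : ContDiffAt ℝ 2 f x) (hW : ContDiffAt ℝ 2 W x) :
    LLop Sv (fun z => f z - W z) x = LLop Sv f x - LLop Sv W x := by
  unfold LLop
  rw [← Finset.sum_sub_distrib]
  refine Finset.sum_congr rfl fun k _ => ?_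
  exact deriv2_sub _ _ (line_contDiffAt x (Sv k) f hf) (line_contDiffAt x (Sv k) W hW)

lemma LLop_const_mul (Sv : Fin n → EuclideanSpace ℝ (Fin n)) (c : ℝ)
    (f : EuclideanSpace ℝ (Fin n) → ℝ) (x : EuclideanSpace ℝ (Fin n)) :
    LLop Sv (fun z => c * f z) x = c * LLop Sv f x := by
  unfold LLop
  rw [Finset.mul_sum]
  exact Finset.sum_congr rfl fun k _ => deriv2_const_mul c _

lemma LLop_sub_const (Sv : Fin n → EuclideanSpace ℝ (Fin n)) (c : ℝ)
    (f : EuclideanSpace ℝ (Fin n) → ℝ) (x : EuclideanSpace ℝ (Fin n)) :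
    LLop Sv (fun z => f z - c) x = LLop Sv f x := by
  unfold LLop
  refine Finset.sum_congr rfl fun k _ => ?_
  have h1 : (deriv fun t : ℝ => f (x + t • Sv k) - c) = deriv fun t : ℝ => f (x + t • Sv k) := by
    funext t
    exact deriv_sub_const c
  rw [h1]

lemma LLop_const_sub (Sv : Fin n → EuclideanSpace ℝ (Fin n)) (c : ℝ)
    (f : EuclideanSpace ℝ (Fin n) → ℝ) (x : EuclideanSpace ℝ (Fin n)) :
    LLop Sv (fun z => c - f z) x = -LLop Sv f x := by
  unfold LLop
  rw [← Finset.sum_neg_distrib]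
  refine Finset.sum_congr rfl fun k _ => ?_
  have h1 : (deriv fun t : ℝ => c - f (x + t • Sv k))
      = fun t : ℝ => -(deriv (fun s : ℝ => f (x + s • Sv k)) t) := by
    funext t
    exact deriv_const_sub c
  rw [h1, deriv.fun_neg]

end llop

section llopQ

variable {n : ℕ}

lemma contDiffAt_Qe_rpow (B : Matrix (Fin n) (Fin n) ℝ) (s : ℝ)
    (x : EuclideanSpace ℝ (Fin n)) (hx : 0 < Qe B x) :
    ContDiffAt ℝ 2 (fun z => Qe B z ^ s) x :=
  (Real.contDiffAt_rpow_const_of_ne hx.ne').comp x (Qe_contDiff B).contDiffAt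

lemma contDiffAt_Qe_rpow_log (B : Matrix (Fin n) (Fin n) ℝ) (s : ℝ)
    (x : EuclideanSpace ℝ (Fin n)) (hx : 0 < Qe B x) :
    ContDiffAt ℝ 2 (fun z => Qe B z ^ s * Real.log (Qe B z)) x :=
  ((Real.contDiffAt_rpow_const_of_ne hx.ne').comp x (Qe_contDiff B).contDiffAt).mul
    ((Real.contDiffAt_log.2 hx.ne').comp x (Qe_contDiff B).contDiffAt)

variable (a B S : Matrix (Fin n) (Fin n) ℝ)
variable (hBsymm : Bᵀ = B) (hSsymm : Sᵀ = S) (hSS : S * S = a) (hBa : B * a = 1)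

include hBsymm hSsymm hSS hBa in
lemma LLop_Qe (x : EuclideanSpace ℝ (Fin n)) (hx : 0 < Qe B x) :
    LLop (rowVec S) (Qe B) x = 2 * n := by
  unfold LLop
  have h := LL_comp_Qe a B S hBsymm hSsymm hSS hBa (fun u => u) (fun _ => (1:ℝ))
    (fun _ => (0:ℝ)) hasDeriv_id1 hasDeriv_id2 x hx
  simpa using h

include hBsymm hSsymm hSS hBa in
lemma LLop_Qe_rpow (s : ℝ) (x : EuclideanSpace ℝ (Fin n)) (hx : 0 < Qe B x) :
    LLop (rowVec S) (fun z => Qe B z ^ s) x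
      = (4 * s * (s - 1) + 2 * n * s) * Qe B x ^ (s - 1) := by
  unfold LLop
  have h := LL_comp_Qe a B S hBsymm hSsymm hSS hBa (fun u => u ^ s)
    (fun u => s * u ^ (s - 1)) (fun u => s * (s - 1) * u ^ (s - 2))
    (hasDeriv_rpow1 s) (hasDeriv_rpow2 s) x hx
  rw [h]
  have he : Qe B x ^ (s - 2) * Qe B x = Qe B x ^ (s - 1) := by
    rw [show s - 2 = s - 1 - 1 by ring, Real.rpow_sub_one hx.ne' (s - 1)]
    field_simp
  calc s * (s - 1) * Qe B x ^ (s - 2) * (4 * Qe B x) + s * Qe B x ^ (s - 1) * (2 * n)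
      = 4 * s * (s - 1) * (Qe B x ^ (s - 2) * Qe B x) + 2 * n * s * Qe B x ^ (s - 1) := by ring
    _ = (4 * s * (s - 1) + 2 * n * s) * Qe B x ^ (s - 1) := by rw [he]; ring

include hBsymm hSsymm hSS hBa in
lemma LLop_Qe_rpow_log (s : ℝ) (x : EuclideanSpace ℝ (Fin n)) (hx : 0 < Qe B x) :
    LLop (rowVec S) (fun z => Qe B z ^ s * Real.log (Qe B z)) x
      = (4 * s * (s - 1) + 2 * n * s) * Qe B x ^ (s - 1) * Real.log (Qe B x)
        + (8 * s - 4 + 2 * n) * Qe B x ^ (s - 1) := by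
  unfold LLop
  have h := LL_comp_Qe a B S hBsymm hSsymm hSS hBa
    (fun u => u ^ s * Real.log u)
    (fun u => s * u ^ (s - 1) * Real.log u + u ^ (s - 1))
    (fun u => s * (s - 1) * u ^ (s - 2) * Real.log u + (2 * s - 1) * u ^ (s - 2))
    (hasDeriv_rpowlog1 s) (hasDeriv_rpowlog2 s) x hx
  rw [h]
  have he : Qe B x ^ (s - 2) * Qe B x = Qe B x ^ (s - 1) := by
    rw [show s - 2 = s - 1 - 1 by ring, Real.rpow_sub_one hx.ne' (s - 1)]
    field_simp
  calc (s * (s - 1) * Qe B x ^ (s - 2) * Real.log (Qe B x) + (2 * s - 1) * Qe B x ^ (s - 2))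
          * (4 * Qe B x)
        + (s * Qe B x ^ (s - 1) * Real.log (Qe B x) + Qe B x ^ (s - 1)) * (2 * n)
      = (4 * s * (s - 1) * Real.log (Qe B x) + 4 * (2 * s - 1)) * (Qe B x ^ (s - 2) * Qe B x)
        + (2 * n * s * Real.log (Qe B x) + 2 * n) * Qe B x ^ (s - 1) := by ring
    _ = (4 * s * (s - 1) + 2 * n * s) * Qe B x ^ (s - 1) * Real.log (Qe B x)
        + (8 * s - 4 + 2 * n) * Qe B x ^ (s - 1) := by rw [he]; ring

end llopQ

section master

lemma two_sided_bound {n : ℕ} (hn : 0 < n)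
    (a B S : Matrix (Fin n) (Fin n) ℝ)
    (hBsymm : Bᵀ = B) (hSsymm : Sᵀ = S) (hSS : S * S = a) (hBa : B * a = 1)
    (hBpos : B.PosDef)
    (h g : EuclideanSpace ℝ (Fin n) → ℝ) (hinf : ℝ) (c2 δ : ℝ) (R₀ : ℝ) (hR₀ : 0 < R₀)
    (hh2 : ∀ x : EuclideanSpace ℝ (Fin n), R₀ ≤ ‖x‖ → ContDiffAt ℝ 2 h x)
    (hLh : ∀ x : EuclideanSpace ℝ (Fin n), R₀ ≤ ‖x‖ → LLop (rowVec S) h x = g x)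
    (hgb : ∀ x : EuclideanSpace ℝ (Fin n), R₀ ≤ ‖x‖ → |g x| ≤ c2 * ‖x‖ ^ (-δ))
    (W : EuclideanSpace ℝ (Fin n) → ℝ)
    (hW2 : ∀ x : EuclideanSpace ℝ (Fin n), R₀ ≤ ‖x‖ → ContDiffAt ℝ 2 W x)
    (hLW : ∀ x : EuclideanSpace ℝ (Fin n), R₀ ≤ ‖x‖ →
      LLop (rowVec S) W x ≤ -(c2 * ‖x‖ ^ (-δ)))
    (hWnn : ∀ x : EuclideanSpace ℝ (Fin n), R₀ ≤ ‖x‖ → 0 ≤ W x)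
    (hinner : ∀ x : EuclideanSpace ℝ (Fin n), ‖x‖ = R₀ → |h x - hinf| ≤ W x)
    (hlim : ∀ ε > (0:ℝ), ∃ R, ∀ x : EuclideanSpace ℝ (Fin n), R ≤ ‖x‖ → |h x - hinf| < ε) :
    ∀ x : EuclideanSpace ℝ (Fin n), R₀ ≤ ‖x‖ → |h x - hinf| ≤ W x := by
  have hQpos : ∀ x : EuclideanSpace ℝ (Fin n), R₀ ≤ ‖x‖ → 0 < Qe B x := by
    intro x hx
    apply Qe_pos B hBpos
    intro hcon
    rw [hcon] at hx
    simp at hx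
    linarith
  have hP2 : ∀ x : EuclideanSpace ℝ (Fin n), ContDiffAt ℝ 2 (Qe B) x :=
    fun x => (Qe_contDiff B).contDiffAt
  have hPnn : ∀ x : EuclideanSpace ℝ (Fin n), 0 ≤ Qe B x := by
    intro x
    rcases eq_or_ne x 0 with rfl | hx
    · simp [Qe]
    · exact (Qe_pos B hBpos x hx).le
  have hPpos : ∀ x : EuclideanSpace ℝ (Fin n), R₀ < ‖x‖ →
      0 < ∑ k, deriv (deriv (fun t : ℝ => Qe B (x + t • rowVec S k))) 0 := by
    intro x hx
    have h1 : (0:ℝ) < 2 * n := by positivity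
    have h2 := LLop_Qe a B S hBsymm hSsymm hSS hBa x (hQpos x hx.le)
    unfold LLop at h2
    rw [h2]
    exact h1
  -- upper bound
  have hup : ∀ x : EuclideanSpace ℝ (Fin n), R₀ ≤ ‖x‖ → h x - hinf ≤ W x := by
    apply maximum_principle (rowVec S) (fun x => h x - hinf) W (Qe B) R₀ hR₀
    · exact fun x hx => (hh2 x hx).sub contDiffAt_const
    · exact hW2
    · exact hP2
    · exact hPnn
    · exact hPpos
    · intro x hx
      show 0 ≤ LLop (rowVec S) (fun z => (h z - hinf) - W z) x
      rw [LLop_sub (rowVec S) _ W x ((hh2 x hx.le).sub contDiffAt_const) (hW2 x hx.le),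
        LLop_sub_const]
      have h1 := hLh x hx.le
      have h2 := hLW x hx.le
      have h3 := hgb x hx.le
      have h4 : -(c2 * ‖x‖ ^ (-δ)) ≤ g x := by
        rcases abs_le.1 h3 with ⟨hl, _⟩
        linarith
      linarith
    · exact hWnn
    · exact fun x hx => le_trans (le_abs_self _) (hinner x hx)
    · intro ε hε
      obtain ⟨R, hR⟩ := hlim ε hε
      exact ⟨R, fun x hx => lt_of_le_of_lt (le_abs_self _) (hR x hx)⟩
  -- lower bound
  have hdown : ∀ x : EuclideanSpace ℝ (Fin n), R₀ ≤ ‖x‖ → hinf - h x ≤ W x := by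
    apply maximum_principle (rowVec S) (fun x => hinf - h x) W (Qe B) R₀ hR₀
    · exact fun x hx => contDiffAt_const.sub (hh2 x hx)
    · exact hW2
    · exact hP2
    · exact hPnn
    · exact hPpos
    · intro x hx
      show 0 ≤ LLop (rowVec S) (fun z => (hinf - h z) - W z) x
      rw [LLop_sub (rowVec S) _ W x (contDiffAt_const.sub (hh2 x hx.le)) (hW2 x hx.le),
        LLop_const_sub]
      have h1 := hLh x hx.le
      have h2 := hLW x hx.le
      have h3 := hgb x hx.le
      have h4 : g x ≤ c2 * ‖x‖ ^ (-δ) := (abs_le.1 h3).2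
      linarith
    · exact hWnn
    · intro x hx
      have := hinner x hx
      rcases abs_le.1 this with ⟨hl, _⟩
      linarith
    · intro ε hε
      obtain ⟨R, hR⟩ := hlim ε hε
      refine ⟨R, fun x hx => ?_⟩
      have := hR x hx
      rcases abs_lt.1 this with ⟨hl, _⟩
      linarith
  intro x hx
  exact abs_le.2 ⟨by linarith [hdown x hx], hup x hx⟩

end master

section rpowhelp

open Real

lemma rpow_sq_eq (nx e : ℝ) (hnx : 0 ≤ nx) : (nx ^ 2) ^ e = nx ^ (2 * e) := by
  rw [← Real.rpow_natCast nx 2, ← Real.rpow_mul hnx]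
  norm_num

lemma rpow_quad_lower (Q C0 nx e : ℝ) (hQ : 0 < Q) (h : Q ≤ C0 * nx ^ 2) (he : e ≤ 0)
    (hC0 : 0 ≤ C0) (hnx : 0 ≤ nx) : C0 ^ e * nx ^ (2 * e) ≤ Q ^ e := by
  have h1 : (C0 * nx ^ 2) ^ e ≤ Q ^ e := Real.rpow_le_rpow_of_nonpos hQ h he
  calc C0 ^ e * nx ^ (2 * e) = (C0 * nx ^ 2) ^ e := by
        rw [Real.mul_rpow hC0 (by positivity), rpow_sq_eq nx e hnx]
    _ ≤ Q ^ e := h1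

lemma rpow_quad_upper (Q c0 nx e : ℝ) (hc0 : 0 < c0) (hnx : 0 < nx)
    (h : c0 * nx ^ 2 ≤ Q) (he : e ≤ 0) : Q ^ e ≤ c0 ^ e * nx ^ (2 * e) := by
  have hpos : 0 < c0 * nx ^ 2 := by positivity
  have h1 : Q ^ e ≤ (c0 * nx ^ 2) ^ e := Real.rpow_le_rpow_of_nonpos hpos h he
  calc Q ^ e ≤ (c0 * nx ^ 2) ^ e := h1
    _ = c0 ^ e * nx ^ (2 * e) := by
        rw [Real.mul_rpow hc0.le (by positivity), rpow_sq_eq nx e hnx.le]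

end rpowhelp

set_option maxHeartbeats 2000000 in
/-- decay rate of solutions of constant-coefficient elliptic
equations with decaying right hand side on exterior domains. -/
theorem stmt4 {n : ℕ} (hn : 3 ≤ n) (Ω : Set (EuclideanSpace ℝ (Fin n)))
    (hΩo : IsOpen Ω) (hΩb : Bornology.IsBounded Ω)
    (h0 : (0 : EuclideanSpace ℝ (Fin n)) ∈ Ω)
    (a : Matrix (Fin n) (Fin n) ℝ) (haSymm : a.IsSymm) (haPos : a.PosDef)
    (h g : EuclideanSpace ℝ (Fin n) → ℝ)
    (hsmooth : ContDiffOn ℝ 2 h Ωᶜ)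
    (γ : ℝ) (hγ : γ ∈ Set.Ioo (0:ℝ) 1)
    (hgHolder : ∀ K : Set (EuclideanSpace ℝ (Fin n)), IsCompact K → K ⊆ Ωᶜ →
      ∃ L : ℝ, ∀ x ∈ K, ∀ y ∈ K, |g x - g y| ≤ L * ‖x - y‖ ^ γ)
    (heq : ∀ x ∉ closure Ω,
      (∑ i, ∑ j, a i j *
        iteratedFDeriv ℝ 2 h x ![EuclideanSpace.single i 1, EuclideanSpace.single j 1]) = g x)
    (c2 δ : ℝ) (hc2 : 0 < c2) (hδ : 2 < δ)
    (hgdecay : ∀ x ∉ Ω, |g x| ≤ c2 * ‖x‖ ^ (-δ))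
    (hinf : ℝ)
    (hlim : ∀ ε > (0:ℝ), ∃ R : ℝ, ∀ x : EuclideanSpace ℝ (Fin n), R ≤ ‖x‖ →
      |h x - hinf| < ε) :
    (δ ≠ n → ∃ C R : ℝ, ∀ x : EuclideanSpace ℝ (Fin n), R ≤ ‖x‖ →
      |h x - hinf| ≤ C * ‖x‖ ^ (2 - min δ (n : ℝ))) ∧
    (δ = n → ∃ C R : ℝ, ∀ x : EuclideanSpace ℝ (Fin n), R ≤ ‖x‖ →
      |h x - hinf| ≤ C * ‖x‖ ^ ((2 : ℝ) - n) * Real.log ‖x‖) := by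
  classical
  obtain ⟨B, S, hBsymm, hSsymm, hSS, hBa, hBpos⟩ := exists_sqrt_inv a haSymm haPos
  have hn0 : 0 < n := by omega
  have hn3 : (3:ℝ) ≤ (n:ℝ) := by exact_mod_cast hn
  obtain ⟨cB, CB, hcB, hCB, hQcomp⟩ := Qe_comparable B hBpos hn0
  obtain ⟨RΩ, hRΩ⟩ : ∃ R : ℝ, closure Ω ⊆ Metric.ball 0 R := by
    obtain ⟨r, hr⟩ := hΩb.closure.subset_ball_lt 0 0
    exact ⟨r, hr.2⟩
  obtain ⟨R₁, hR₁⟩ := hlim 1 one_pos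
  set R₀ : ℝ := max (max (RΩ + 1) (R₁ + 1)) (max 1 (2 / Real.sqrt cB)) with hR₀def
  have hR₀1 : (1:ℝ) ≤ R₀ := le_trans (le_max_left 1 _) (le_max_right _ _)
  have hR₀pos : (0:ℝ) < R₀ := lt_of_lt_of_le one_pos hR₀1
  have hout : ∀ x : EuclideanSpace ℝ (Fin n), R₀ ≤ ‖x‖ → x ∉ closure Ω := by
    intro x hx hmem
    have h1 := hRΩ hmem
    rw [mem_ball_zero_iff] at h1
    have h2 : RΩ + 1 ≤ R₀ := le_trans (le_max_left _ _) (le_max_left _ _)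
    linarith
  have houtΩ : ∀ x : EuclideanSpace ℝ (Fin n), R₀ ≤ ‖x‖ → x ∉ Ω :=
    fun x hx hm => hout x hx (subset_closure hm)
  have hC2h : ∀ x : EuclideanSpace ℝ (Fin n), R₀ ≤ ‖x‖ → ContDiffAt ℝ 2 h x := by
    intro x hx
    apply hsmooth.contDiffAt
    rw [mem_nhds_iff]
    exact ⟨(closure Ω)ᶜ, fun y hy hm => hy (subset_closure hm),
      isClosed_closure.isOpen_compl, hout x hx⟩
  have hLh : ∀ x : EuclideanSpace ℝ (Fin n), R₀ ≤ ‖x‖ → LLop (rowVec S) h x = g x := by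
    intro x hx
    have h1 := LL_eq_sum_a a S hSsymm hSS h x (hC2h x hx)
    have h2 := heq x (hout x hx)
    unfold LLop
    rw [h1]
    exact h2
  have hgb : ∀ x : EuclideanSpace ℝ (Fin n), R₀ ≤ ‖x‖ → |g x| ≤ c2 * ‖x‖ ^ (-δ) :=
    fun x hx => hgdecay x (houtΩ x hx)
  have hR₁R₀ : R₁ ≤ R₀ := by
    have := le_trans (le_max_right (RΩ + 1) (R₁ + 1)) (le_max_left _ (max 1 (2 / Real.sqrt cB)))
    linarith
  have hsphere1 : ∀ x : EuclideanSpace ℝ (Fin n), ‖x‖ = R₀ → |h x - hinf| ≤ 1 := by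
    intro x hx
    exact le_of_lt (hR₁ x (by rw [hx]; exact hR₁R₀))
  have hQ4 : ∀ x : EuclideanSpace ℝ (Fin n), R₀ ≤ ‖x‖ → 4 ≤ Qe B x := by
    intro x hx
    have h1 : 2 / Real.sqrt cB ≤ R₀ := le_trans (le_max_right _ _) (le_max_right _ _)
    have hs : 0 < Real.sqrt cB := Real.sqrt_pos.2 hcB
    have h3 : 2 ≤ R₀ * Real.sqrt cB := by
      rw [div_le_iff₀ hs] at h1
      linarith
    have h4 : Real.sqrt cB ^ 2 = cB := Real.sq_sqrt hcB.le
    have h5 := (hQcomp x).1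
    have h6 : (R₀ * Real.sqrt cB) ^ 2 = cB * R₀ ^ 2 := by rw [mul_pow, h4]; ring
    have h7 : 4 ≤ cB * R₀ ^ 2 := by nlinarith [mul_self_nonneg (R₀ * Real.sqrt cB - 2)]
    have h8 : R₀ * R₀ ≤ ‖x‖ * ‖x‖ :=
      mul_le_mul hx hx hR₀pos.le (norm_nonneg x)
    nlinarith
  have hQpos : ∀ x : EuclideanSpace ℝ (Fin n), R₀ ≤ ‖x‖ → 0 < Qe B x := by
    intro x hx
    linarith [hQ4 x hx]
  constructor
  · -- δ ≠ n
    intro hne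
    rcases lt_or_gt_of_ne hne with hlt | hgt
    · -- CASE A : δ < n
      set s : ℝ := (2 - δ) / 2 with hsdef
      have hsneg : s < 0 := by rw [hsdef]; linarith
      set κ : ℝ := (2 - δ) * ((n:ℝ) - δ) with hκdef
      have hκneg : κ < 0 := mul_neg_of_neg_of_pos (by linarith) (by linarith)
      have hco : 4 * s * (s - 1) + 2 * (n:ℝ) * s = κ := by rw [hsdef, hκdef]; ring
      have hA : (0:ℝ) < CB ^ (δ / 2) := Real.rpow_pos_of_pos hCB _
      set M : ℝ := max (c2 * CB ^ (δ / 2) / (-κ)) ((CB * R₀ ^ 2) ^ (-s)) with hMdef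
      have hM1 : c2 * CB ^ (δ / 2) / (-κ) ≤ M := le_max_left _ _
      have hM2 : (CB * R₀ ^ 2) ^ (-s) ≤ M := le_max_right _ _
      have hMpos : 0 < M :=
        lt_of_lt_of_le (div_pos (mul_pos hc2 hA) (by linarith)) hM1
      have habs : ∀ x : EuclideanSpace ℝ (Fin n), R₀ ≤ ‖x‖ →
          |h x - hinf| ≤ M * Qe B x ^ s := by
        apply two_sided_bound hn0 a B S hBsymm hSsymm hSS hBa hBpos h g hinf c2 δ R₀
          hR₀pos hC2h hLh hgb (fun z => M * Qe B z ^ s) ?_ ?_ ?_ ?_ hlim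
        · exact fun x hx => (contDiffAt_const (c := M)).mul (contDiffAt_Qe_rpow B s x (hQpos x hx))
        · intro x hx
          have hQp := hQpos x hx
          have hL : LLop (rowVec S) (fun z => M * Qe B z ^ s) x
              = M * (κ * Qe B x ^ (s - 1)) := by
            rw [LLop_const_mul (rowVec S) M (fun z => Qe B z ^ s) x,
              LLop_Qe_rpow a B S hBsymm hSsymm hSS hBa s x hQp, hco]
          rw [hL]
          have hQe : CB ^ (s - 1) * ‖x‖ ^ (2 * (s - 1)) ≤ Qe B x ^ (s - 1) :=
            rpow_quad_lower _ CB ‖x‖ (s - 1) hQp (hQcomp x).2 (by linarith) hCB.le (norm_nonneg x)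
          have he1 : 2 * (s - 1) = -δ := by rw [hsdef]; ring
          have he2 : CB ^ (s - 1) = (CB ^ (δ / 2))⁻¹ := by
            rw [show s - 1 = -(δ/2) by rw [hsdef]; ring, Real.rpow_neg hCB.le]
          rw [he1, he2] at hQe
          have hMκ : c2 * CB ^ (δ / 2) ≤ M * (-κ) := by
            rw [div_le_iff₀ (by linarith : (0:ℝ) < -κ)] at hM1
            linarith
          have hc2A : c2 ≤ M * (-κ) * (CB ^ (δ / 2))⁻¹ := by
            have hrw : c2 = c2 * CB ^ (δ / 2) * (CB ^ (δ / 2))⁻¹ := by field_simp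
            rw [hrw]
            exact mul_le_mul_of_nonneg_right hMκ (inv_nonneg.2 hA.le)
          have step1 : M * (-κ) * ((CB ^ (δ / 2))⁻¹ * ‖x‖ ^ (-δ)) ≤ M * (-κ) * Qe B x ^ (s - 1) :=
            mul_le_mul_of_nonneg_left hQe (mul_nonneg hMpos.le (by linarith))
          have step2 : c2 * ‖x‖ ^ (-δ) ≤ M * (-κ) * (CB ^ (δ / 2))⁻¹ * ‖x‖ ^ (-δ) :=
            mul_le_mul_of_nonneg_right hc2A (Real.rpow_nonneg (norm_nonneg x) _)
          have heq2 : M * (-κ) * (CB ^ (δ / 2))⁻¹ * ‖x‖ ^ (-δ)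
              = M * (-κ) * ((CB ^ (δ / 2))⁻¹ * ‖x‖ ^ (-δ)) := by ring
          have heq3 : M * (κ * Qe B x ^ (s - 1)) = -(M * (-κ) * Qe B x ^ (s - 1)) := by ring
          linarith
        · intro x hx
          exact mul_nonneg hMpos.le (Real.rpow_nonneg (hQpos x hx).le _)
        · intro x hx
          have hQp : 0 < Qe B x := hQpos x (le_of_eq hx.symm)
          have hQub : Qe B x ≤ CB * R₀ ^ 2 := by
            have := (hQcomp x).2
            rw [hx] at this
            exact this
          have h1 : (CB * R₀ ^ 2) ^ s ≤ Qe B x ^ s :=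
            Real.rpow_le_rpow_of_nonpos hQp hQub hsneg.le
          have hX : (CB * R₀ ^ 2) ^ (-s) * (CB * R₀ ^ 2) ^ s = 1 := by
            rw [← Real.rpow_add (by positivity)]
            simp
          have h2 : 1 ≤ M * (CB * R₀ ^ 2) ^ s := by
            have h3 : (0:ℝ) < (CB * R₀ ^ 2) ^ s := Real.rpow_pos_of_pos (by positivity) _
            nlinarith
          calc |h x - hinf| ≤ 1 := hsphere1 x hx
            _ ≤ M * (CB * R₀ ^ 2) ^ s := h2
            _ ≤ M * Qe B x ^ s := by nlinarith
      refine ⟨M * cB ^ s, R₀, fun x hx => ?_⟩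
      have hW := habs x hx
      have hup : Qe B x ^ s ≤ cB ^ s * ‖x‖ ^ (2 * s) :=
        rpow_quad_upper _ cB ‖x‖ s hcB (lt_of_lt_of_le hR₀pos hx) (hQcomp x).1 hsneg.le
      have he : 2 * s = 2 - min δ (n:ℝ) := by
        rw [min_eq_left hlt.le, hsdef]; ring
      rw [he] at hup
      calc |h x - hinf| ≤ M * Qe B x ^ s := hW
        _ ≤ M * (cB ^ s * ‖x‖ ^ (2 - min δ (n:ℝ))) := by nlinarith
        _ = M * cB ^ s * ‖x‖ ^ (2 - min δ (n:ℝ)) := by ring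
    ·       -- CASE B : δ > n
      set s0 : ℝ := (2 - (n:ℝ)) / 2 with hs0def
      set s1 : ℝ := (2 - δ) / 2 with hs1def
      have hs0neg : s0 < 0 := by rw [hs0def]; linarith
      have hs1neg : s1 < 0 := by rw [hs1def]; linarith
      have hco0 : 4 * s0 * (s0 - 1) + 2 * (n:ℝ) * s0 = 0 := by rw [hs0def]; ring
      set κ : ℝ := (2 - δ) * ((n:ℝ) - δ) with hκdef
      have hκpos : 0 < κ := mul_pos_of_neg_of_neg (by linarith) (by linarith)
      have hco1 : 4 * s1 * (s1 - 1) + 2 * (n:ℝ) * s1 = κ := by rw [hs1def, hκdef]; ring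
      set θ : ℝ := 1 - (4:ℝ) ^ (((n:ℝ) - δ) / 2) with hθdef
      have hθ1 : (4:ℝ) ^ (((n:ℝ) - δ) / 2) < 1 :=
        Real.rpow_lt_one_of_one_lt_of_neg (by norm_num) (by linarith)
      have hθpos : 0 < θ := by rw [hθdef]; linarith
      have hA : (0:ℝ) < CB ^ (δ / 2) := Real.rpow_pos_of_pos hCB _
      have hCR : (0:ℝ) < (CB * R₀ ^ 2) ^ s0 := Real.rpow_pos_of_pos (by positivity) _
      set M : ℝ := max (c2 * CB ^ (δ / 2) / κ) ((θ * (CB * R₀ ^ 2) ^ s0)⁻¹) with hMdef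
      have hM1 : c2 * CB ^ (δ / 2) / κ ≤ M := le_max_left _ _
      have hM2 : (θ * (CB * R₀ ^ 2) ^ s0)⁻¹ ≤ M := le_max_right _ _
      have hMpos : 0 < M := lt_of_lt_of_le (div_pos (mul_pos hc2 hA) hκpos) hM1
      -- pointwise lower bound for the barrier
      have hbar : ∀ x : EuclideanSpace ℝ (Fin n), R₀ ≤ ‖x‖ →
          θ * Qe B x ^ s0 ≤ Qe B x ^ s0 - Qe B x ^ s1 := by
        intro x hx
        have hQp := hQpos x hx
        have hQ4' := hQ4 x hx
        have h1 : Qe B x ^ s1 = Qe B x ^ s0 * Qe B x ^ (((n:ℝ) - δ) / 2) := by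
          rw [← Real.rpow_add hQp]
          congr 1
          rw [hs0def, hs1def]; ring
        have h2 : Qe B x ^ (((n:ℝ) - δ) / 2) ≤ (4:ℝ) ^ (((n:ℝ) - δ) / 2) :=
          Real.rpow_le_rpow_of_nonpos (by norm_num) hQ4' (by linarith)
        have h3 : (0:ℝ) < Qe B x ^ s0 := Real.rpow_pos_of_pos hQp _
        rw [h1, hθdef]
        nlinarith
      have habs : ∀ x : EuclideanSpace ℝ (Fin n), R₀ ≤ ‖x‖ →
          |h x - hinf| ≤ M * (Qe B x ^ s0 - Qe B x ^ s1) := by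
        apply two_sided_bound hn0 a B S hBsymm hSsymm hSS hBa hBpos h g hinf c2 δ R₀
          hR₀pos hC2h hLh hgb (fun z => M * (Qe B z ^ s0 - Qe B z ^ s1)) ?_ ?_ ?_ ?_ hlim
        · intro x hx
          exact (contDiffAt_const (c := M)).mul
            ((contDiffAt_Qe_rpow B s0 x (hQpos x hx)).sub (contDiffAt_Qe_rpow B s1 x (hQpos x hx)))
        · intro x hx
          have hQp := hQpos x hx
          have hL : LLop (rowVec S) (fun z => M * (Qe B z ^ s0 - Qe B z ^ s1)) x
              = M * (0 * Qe B x ^ (s0 - 1) - κ * Qe B x ^ (s1 - 1)) := by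
            rw [LLop_const_mul (rowVec S) M (fun z => Qe B z ^ s0 - Qe B z ^ s1) x,
              LLop_sub (rowVec S) _ _ x (contDiffAt_Qe_rpow B s0 x hQp)
                (contDiffAt_Qe_rpow B s1 x hQp),
              LLop_Qe_rpow a B S hBsymm hSsymm hSS hBa s0 x hQp,
              LLop_Qe_rpow a B S hBsymm hSsymm hSS hBa s1 x hQp, hco0, hco1]
          rw [hL]
          have hQe : CB ^ (s1 - 1) * ‖x‖ ^ (2 * (s1 - 1)) ≤ Qe B x ^ (s1 - 1) :=
            rpow_quad_lower _ CB ‖x‖ (s1 - 1) hQp (hQcomp x).2 (by linarith) hCB.le (norm_nonneg x)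
          have he1 : 2 * (s1 - 1) = -δ := by rw [hs1def]; ring
          have he2 : CB ^ (s1 - 1) = (CB ^ (δ / 2))⁻¹ := by
            rw [show s1 - 1 = -(δ/2) by rw [hs1def]; ring, Real.rpow_neg hCB.le]
          rw [he1, he2] at hQe
          have hMκ : c2 * CB ^ (δ / 2) ≤ M * κ := by
            rw [div_le_iff₀ hκpos] at hM1
            linarith
          have hc2A : c2 ≤ M * κ * (CB ^ (δ / 2))⁻¹ := by
            have hrw : c2 = c2 * CB ^ (δ / 2) * (CB ^ (δ / 2))⁻¹ := by field_simp
            rw [hrw]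
            exact mul_le_mul_of_nonneg_right hMκ (inv_nonneg.2 hA.le)
          have step1 : M * κ * ((CB ^ (δ / 2))⁻¹ * ‖x‖ ^ (-δ)) ≤ M * κ * Qe B x ^ (s1 - 1) :=
            mul_le_mul_of_nonneg_left hQe (mul_nonneg hMpos.le hκpos.le)
          have step2 : c2 * ‖x‖ ^ (-δ) ≤ M * κ * (CB ^ (δ / 2))⁻¹ * ‖x‖ ^ (-δ) :=
            mul_le_mul_of_nonneg_right hc2A (Real.rpow_nonneg (norm_nonneg x) _)
          have heq2 : M * κ * (CB ^ (δ / 2))⁻¹ * ‖x‖ ^ (-δ)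
              = M * κ * ((CB ^ (δ / 2))⁻¹ * ‖x‖ ^ (-δ)) := by ring
          have heq3 : M * (0 * Qe B x ^ (s0 - 1) - κ * Qe B x ^ (s1 - 1))
              = -(M * κ * Qe B x ^ (s1 - 1)) := by ring
          linarith
        · intro x hx
          have h1 := hbar x hx
          have h2 : 0 < Qe B x ^ s0 := Real.rpow_pos_of_pos (hQpos x hx) _
          have h3 : 0 ≤ θ * Qe B x ^ s0 := mul_nonneg hθpos.le h2.le
          exact mul_nonneg hMpos.le (le_trans h3 h1)
        · intro x hx
          have hxR : R₀ ≤ ‖x‖ := le_of_eq hx.symm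
          have hQp : 0 < Qe B x := hQpos x hxR
          have hQub : Qe B x ≤ CB * R₀ ^ 2 := by
            have := (hQcomp x).2
            rw [hx] at this
            exact this
          have h1 : (CB * R₀ ^ 2) ^ s0 ≤ Qe B x ^ s0 :=
            Real.rpow_le_rpow_of_nonpos hQp hQub hs0neg.le
          have h2 : 1 ≤ M * (θ * (CB * R₀ ^ 2) ^ s0) := by
            have h4 : (0:ℝ) < θ * (CB * R₀ ^ 2) ^ s0 := mul_pos hθpos hCR
            have h6 := mul_le_mul_of_nonneg_right hM2 h4.le
            rwa [inv_mul_cancel₀ h4.ne'] at h6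
          have h5 := hbar x hxR
          calc |h x - hinf| ≤ 1 := hsphere1 x hx
            _ ≤ M * (θ * (CB * R₀ ^ 2) ^ s0) := h2
            _ ≤ M * (θ * Qe B x ^ s0) := by nlinarith
            _ ≤ M * (Qe B x ^ s0 - Qe B x ^ s1) := by nlinarith
      refine ⟨M * cB ^ s0, R₀, fun x hx => ?_⟩
      have hW := habs x hx
      have hup : Qe B x ^ s0 ≤ cB ^ s0 * ‖x‖ ^ (2 * s0) :=
        rpow_quad_upper _ cB ‖x‖ s0 hcB (lt_of_lt_of_le hR₀pos hx) (hQcomp x).1 hs0neg.le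
      have he : 2 * s0 = 2 - min δ (n:ℝ) := by
        rw [min_eq_right hgt.le, hs0def]; ring
      rw [he] at hup
      have h2 : 0 ≤ Qe B x ^ s1 := Real.rpow_nonneg (hQpos x hx).le _
      calc |h x - hinf| ≤ M * (Qe B x ^ s0 - Qe B x ^ s1) := hW
        _ ≤ M * Qe B x ^ s0 := by nlinarith
        _ ≤ M * (cB ^ s0 * ‖x‖ ^ (2 - min δ (n:ℝ))) := by nlinarith
        _ = M * cB ^ s0 * ‖x‖ ^ (2 - min δ (n:ℝ)) := by ring
  · -- CASE C : δ = n
    intro hcase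
    subst hcase
    set s0 : ℝ := (2 - (n:ℝ)) / 2 with hs0def
    have hs0neg : s0 < 0 := by rw [hs0def]; linarith
    have hco0 : 4 * s0 * (s0 - 1) + 2 * (n:ℝ) * s0 = 0 := by rw [hs0def]; ring
    have hco2 : 8 * s0 - 4 + 2 * (n:ℝ) = 4 - 2 * (n:ℝ) := by rw [hs0def]; ring
    have h2n4 : (0:ℝ) < 2 * (n:ℝ) - 4 := by linarith
    have hA : (0:ℝ) < CB ^ ((n:ℝ) / 2) := Real.rpow_pos_of_pos hCB _
    have hCR : (0:ℝ) < (CB * R₀ ^ 2) ^ s0 := Real.rpow_pos_of_pos (by positivity) _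
    have hlog4 : (0:ℝ) < Real.log 4 := Real.log_pos (by norm_num)
    set M : ℝ := max (c2 * CB ^ ((n:ℝ) / 2) / (2 * (n:ℝ) - 4))
      (((CB * R₀ ^ 2) ^ s0 * Real.log 4)⁻¹) with hMdef
    have hM1 : c2 * CB ^ ((n:ℝ) / 2) / (2 * (n:ℝ) - 4) ≤ M := le_max_left _ _
    have hM2 : ((CB * R₀ ^ 2) ^ s0 * Real.log 4)⁻¹ ≤ M := le_max_right _ _
    have hMpos : 0 < M := lt_of_lt_of_le (div_pos (mul_pos hc2 hA) h2n4) hM1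
    have hlogQ : ∀ x : EuclideanSpace ℝ (Fin n), R₀ ≤ ‖x‖ →
        Real.log 4 ≤ Real.log (Qe B x) :=
      fun x hx => Real.log_le_log (by norm_num) (hQ4 x hx)
    have habs : ∀ x : EuclideanSpace ℝ (Fin n), R₀ ≤ ‖x‖ →
        |h x - hinf| ≤ M * (Qe B x ^ s0 * Real.log (Qe B x)) := by
      apply two_sided_bound hn0 a B S hBsymm hSsymm hSS hBa hBpos h g hinf c2 ((n:ℝ)) R₀
        hR₀pos hC2h hLh hgb (fun z => M * (Qe B z ^ s0 * Real.log (Qe B z))) ?_ ?_ ?_ ?_ hlim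
      · intro x hx
        exact (contDiffAt_const (c := M)).mul (contDiffAt_Qe_rpow_log B s0 x (hQpos x hx))
      · intro x hx
        have hQp := hQpos x hx
        have hL : LLop (rowVec S) (fun z => M * (Qe B z ^ s0 * Real.log (Qe B z))) x
            = M * (0 * Qe B x ^ (s0 - 1) * Real.log (Qe B x)
                + (4 - 2 * (n:ℝ)) * Qe B x ^ (s0 - 1)) := by
          rw [LLop_const_mul (rowVec S) M (fun z => Qe B z ^ s0 * Real.log (Qe B z)) x,
            LLop_Qe_rpow_log a B S hBsymm hSsymm hSS hBa s0 x hQp, hco0, hco2]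
        rw [hL]
        have hQe : CB ^ (s0 - 1) * ‖x‖ ^ (2 * (s0 - 1)) ≤ Qe B x ^ (s0 - 1) :=
          rpow_quad_lower _ CB ‖x‖ (s0 - 1) hQp (hQcomp x).2 (by linarith) hCB.le (norm_nonneg x)
        have he1 : 2 * (s0 - 1) = -(n:ℝ) := by rw [hs0def]; ring
        have he2 : CB ^ (s0 - 1) = (CB ^ ((n:ℝ) / 2))⁻¹ := by
          rw [show s0 - 1 = -((n:ℝ)/2) by rw [hs0def]; ring, Real.rpow_neg hCB.le]
        rw [he1, he2] at hQe
        have hMκ : c2 * CB ^ ((n:ℝ) / 2) ≤ M * (2 * (n:ℝ) - 4) := by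
          rw [div_le_iff₀ h2n4] at hM1
          linarith
        have hc2A : c2 ≤ M * (2 * (n:ℝ) - 4) * (CB ^ ((n:ℝ) / 2))⁻¹ := by
          have hrw : c2 = c2 * CB ^ ((n:ℝ) / 2) * (CB ^ ((n:ℝ) / 2))⁻¹ := by field_simp
          rw [hrw]
          exact mul_le_mul_of_nonneg_right hMκ (inv_nonneg.2 hA.le)
        have step1 : M * (2 * (n:ℝ) - 4) * ((CB ^ ((n:ℝ) / 2))⁻¹ * ‖x‖ ^ (-(n:ℝ)))
            ≤ M * (2 * (n:ℝ) - 4) * Qe B x ^ (s0 - 1) :=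
          mul_le_mul_of_nonneg_left hQe (mul_nonneg hMpos.le h2n4.le)
        have step2 : c2 * ‖x‖ ^ (-(n:ℝ))
            ≤ M * (2 * (n:ℝ) - 4) * (CB ^ ((n:ℝ) / 2))⁻¹ * ‖x‖ ^ (-(n:ℝ)) :=
          mul_le_mul_of_nonneg_right hc2A (Real.rpow_nonneg (norm_nonneg x) _)
        have heq2 : M * (2 * (n:ℝ) - 4) * (CB ^ ((n:ℝ) / 2))⁻¹ * ‖x‖ ^ (-(n:ℝ))
            = M * (2 * (n:ℝ) - 4) * ((CB ^ ((n:ℝ) / 2))⁻¹ * ‖x‖ ^ (-(n:ℝ))) := by ring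
        have heq3 : M * (0 * Qe B x ^ (s0 - 1) * Real.log (Qe B x)
              + (4 - 2 * (n:ℝ)) * Qe B x ^ (s0 - 1))
            = -(M * (2 * (n:ℝ) - 4) * Qe B x ^ (s0 - 1)) := by ring
        linarith
      · intro x hx
        have h1 : 0 < Qe B x ^ s0 := Real.rpow_pos_of_pos (hQpos x hx) _
        have h2 := hlogQ x hx
        exact mul_nonneg hMpos.le (mul_nonneg h1.le (by linarith))
      · intro x hx
        have hxR : R₀ ≤ ‖x‖ := le_of_eq hx.symm
        have hQp : 0 < Qe B x := hQpos x hxR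
        have hQub : Qe B x ≤ CB * R₀ ^ 2 := by
          have := (hQcomp x).2
          rw [hx] at this
          exact this
        have h1 : (CB * R₀ ^ 2) ^ s0 ≤ Qe B x ^ s0 :=
          Real.rpow_le_rpow_of_nonpos hQp hQub hs0neg.le
        have h2 : 1 ≤ M * ((CB * R₀ ^ 2) ^ s0 * Real.log 4) := by
          have h4 : (0:ℝ) < (CB * R₀ ^ 2) ^ s0 * Real.log 4 := mul_pos hCR hlog4
          have h6 := mul_le_mul_of_nonneg_right hM2 h4.le
          rwa [inv_mul_cancel₀ h4.ne'] at h6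
        have h5 : (CB * R₀ ^ 2) ^ s0 * Real.log 4 ≤ Qe B x ^ s0 * Real.log (Qe B x) :=
          mul_le_mul h1 (hlogQ x hxR) hlog4.le (Real.rpow_nonneg hQp.le _)
        calc |h x - hinf| ≤ 1 := hsphere1 x hx
          _ ≤ M * ((CB * R₀ ^ 2) ^ s0 * Real.log 4) := h2
          _ ≤ M * (Qe B x ^ s0 * Real.log (Qe B x)) :=
            mul_le_mul_of_nonneg_left h5 hMpos.le
    refine ⟨3 * M * cB ^ s0, max R₀ (max CB 3), fun x hx => ?_⟩
    have hxR₀ : R₀ ≤ ‖x‖ := le_trans (le_max_left _ _) hx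
    have hxCB : CB ≤ ‖x‖ := le_trans (le_trans (le_max_left _ _) (le_max_right _ _)) hx
    have hx3 : (3:ℝ) ≤ ‖x‖ := le_trans (le_trans (le_max_right _ _) (le_max_right _ _)) hx
    have hQp := hQpos x hxR₀
    have hW := habs x hxR₀
    have hup : Qe B x ^ s0 ≤ cB ^ s0 * ‖x‖ ^ (2 * s0) :=
      rpow_quad_upper _ cB ‖x‖ s0 hcB (lt_of_lt_of_le hR₀pos hxR₀) (hQcomp x).1 hs0neg.le
    have he : 2 * s0 = 2 - (n:ℝ) := by rw [hs0def]; ring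
    rw [he] at hup
    have hnormpos : (0:ℝ) < ‖x‖ := by linarith
    have hlogub : Real.log (Qe B x) ≤ Real.log CB + 2 * Real.log ‖x‖ := by
      have h1 : Real.log (Qe B x) ≤ Real.log (CB * ‖x‖ ^ 2) :=
        Real.log_le_log hQp (hQcomp x).2
      rw [Real.log_mul hCB.ne' (by positivity), Real.log_pow] at h1
      calc Real.log (Qe B x) ≤ Real.log CB + (2:ℕ) * Real.log ‖x‖ := h1
        _ = Real.log CB + 2 * Real.log ‖x‖ := by norm_num
    have hlogCB : Real.log CB ≤ Real.log ‖x‖ := Real.log_le_log hCB hxCB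
    have hlog3 : Real.log (Qe B x) ≤ 3 * Real.log ‖x‖ := by linarith
    have hlogQpos : 0 ≤ Real.log (Qe B x) := le_trans hlog4.le (hlogQ x hxR₀)
    have hfac : (0:ℝ) ≤ cB ^ s0 * ‖x‖ ^ (2 - (n:ℝ)) :=
      mul_nonneg (Real.rpow_nonneg hcB.le _) (Real.rpow_nonneg (norm_nonneg x) _)
    have hmul1 : Qe B x ^ s0 * Real.log (Qe B x)
        ≤ (cB ^ s0 * ‖x‖ ^ (2 - (n:ℝ))) * (3 * Real.log ‖x‖) :=
      mul_le_mul hup hlog3 hlogQpos hfac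
    calc |h x - hinf| ≤ M * (Qe B x ^ s0 * Real.log (Qe B x)) := hW
      _ ≤ M * ((cB ^ s0 * ‖x‖ ^ (2 - (n:ℝ))) * (3 * Real.log ‖x‖)) :=
        mul_le_mul_of_nonneg_left hmul1 hMpos.le
      _ = 3 * M * cB ^ s0 * ‖x‖ ^ ((2:ℝ) - (n:ℝ)) * Real.log ‖x‖ := by ring
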